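/- Every weakly strongly 2-nil-clean ring R is strongly π-regular: for every a ∈ R there exists a positive integer n such that a^n ∈ a^{n+1}R. -/

import Mathlib

/-- A ring is weakly strongly 2-nil-clean if every element is `±e ± f + n` with
`e, f` idempotents and `n` nilpotent, all commuting with each other. -/
def IsWeaklyStrongly2NilClean (R : Type*) [Ring R] : Prop :=
  ∀ a : R, ∃ e f n : R, IsIdempotentElem e ∧ IsIdempotentElem f ∧ IsNilpotent n ∧
    Commute e f ∧ Commute e n ∧ Commute f n ∧
    (a = e + f + n ∨ a = e - f + n ∨ a = -e + f + n ∨ a = -e - f + n)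

/-- A ring is strongly 2-nil-clean if every element is `e + f + n` with
`e, f` idempotents and `n` nilpotent, all commuting with each other. -/
def IsStrongly2NilClean (R : Type*) [Ring R] : Prop :=
  ∀ a : R, ∃ e f n : R, IsIdempotentElem e ∧ IsIdempotentElem f ∧ IsNilpotent n ∧
    Commute e f ∧ Commute e n ∧ Commute f n ∧ a = e + f + n

section Aux

variable {A : Type*} [CommRing A]

/-- `(e+f)(e+f-1)(e+f-2) = 0` for commuting idempotents. -/
lemma wsnc_L1 (e f : A) (he : e * e = e) (hf : f * f = f) :
    (e + f) ^ 3 - 3 * (e + f) ^ 2 + 2 * (e + f) = 0 := by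
  linear_combination (e + 3 * f - 2) * he + (f + 3 * e - 2) * hf

/-- `(e-f)^3 = e-f` for commuting idempotents. -/
lemma wsnc_L2 (e f : A) (he : e * e = e) (hf : f * f = f) :
    (e - f) ^ 3 - (e - f) = 0 := by
  linear_combination (e - 3 * f + 1) * he + (3 * e - f - 1) * hf

/-- In the commutative setting, `x^5 - 5x^3 + 4x` is nilpotent whenever
`x = ±e ± f + n`. -/
lemma wsnc_master (e f n x : A) (he : e * e = e) (hf : f * f = f)
    (hn : IsNilpotent n)
    (hc : x = e + f + n ∨ x = e - f + n ∨ x = -e + f + n ∨ x = -e - f + n) :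
    IsNilpotent (x ^ 5 - 5 * x ^ 3 + 4 * x) := by
  have hP : (x - n) ^ 5 - 5 * (x - n) ^ 3 + 4 * (x - n) = 0 := by
    rcases hc with h | h | h | h
    · have hs : e + f = x - n := by linear_combination -h
      have L := wsnc_L1 e f he hf
      rw [hs] at L
      linear_combination ((x - n) ^ 2 + 3 * (x - n) + 2) * L
    · have hs : e - f = x - n := by linear_combination -h
      have L := wsnc_L2 e f he hf
      rw [hs] at L
      linear_combination ((x - n) ^ 2 - 4) * L
    · have hs : f - e = x - n := by linear_combination -h
      have L := wsnc_L2 f e hf he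
      rw [hs] at L
      linear_combination ((x - n) ^ 2 - 4) * L
    · have hs : e + f = n - x := by linear_combination h
      have L := wsnc_L1 e f he hf
      rw [hs] at L
      linear_combination (-((n - x) ^ 2 + 3 * (n - x) + 2)) * L
  obtain ⟨c5, h5⟩ := sub_dvd_pow_sub_pow x (x - n) 5
  obtain ⟨c3, h3⟩ := sub_dvd_pow_sub_pow x (x - n) 3
  have key : x ^ 5 - 5 * x ^ 3 + 4 * x = n * (c5 - 5 * c3 + 4) := by
    linear_combination hP + h5 - 5 * h3
  rw [key]
  exact (Commute.all n _).isNilpotent_mul_right hn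

/-- In the commutative setting, if `3 = ±e ± f + n` then `120` is nilpotent. -/
lemma wsnc_nil120_comm (e f n : A) (he : e * e = e) (hf : f * f = f)
    (hn : IsNilpotent n)
    (hc : (3 : A) = e + f + n ∨ (3 : A) = e - f + n ∨
      (3 : A) = -e + f + n ∨ (3 : A) = -e - f + n) :
    IsNilpotent (120 : A) := by
  rcases hc with h | h | h | h
  · have hs : e + f = 3 - n := by linear_combination -h
    have L := wsnc_L1 e f he hf
    rw [hs] at L
    have h6 : (6 : A) = n * (n ^ 2 - 6 * n + 11) := by linear_combination L
    have hnil6 : IsNilpotent (6 : A) := by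
      rw [h6]; exact (Commute.all n _).isNilpotent_mul_right hn
    have : (120 : A) = 6 * 20 := by norm_num
    rw [this]; exact (Commute.all _ _).isNilpotent_mul_right hnil6
  · have hs : e - f = 3 - n := by linear_combination -h
    have L := wsnc_L2 e f he hf
    rw [hs] at L
    have h24 : (24 : A) = n * (n ^ 2 - 9 * n + 26) := by linear_combination L
    have hnil : IsNilpotent (24 : A) := by
      rw [h24]; exact (Commute.all n _).isNilpotent_mul_right hn
    have : (120 : A) = 24 * 5 := by norm_num
    rw [this]; exact (Commute.all _ _).isNilpotent_mul_right hnil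
  · have hs : f - e = 3 - n := by linear_combination -h
    have L := wsnc_L2 f e hf he
    rw [hs] at L
    have h24 : (24 : A) = n * (n ^ 2 - 9 * n + 26) := by linear_combination L
    have hnil : IsNilpotent (24 : A) := by
      rw [h24]; exact (Commute.all n _).isNilpotent_mul_right hn
    have : (120 : A) = 24 * 5 := by norm_num
    rw [this]; exact (Commute.all _ _).isNilpotent_mul_right hnil
  · have hs : e + f = n - 3 := by linear_combination h
    have L := wsnc_L1 e f he hf
    rw [hs] at L
    have h60 : (60 : A) = n * (n ^ 2 - 12 * n + 47) := by linear_combination -L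
    have hnil : IsNilpotent (60 : A) := by
      rw [h60]; exact (Commute.all n _).isNilpotent_mul_right hn
    have : (120 : A) = 60 * 2 := by norm_num
    rw [this]; exact (Commute.all _ _).isNilpotent_mul_right hnil

/-- Key commutative lemma: if `a^5 - 5a^3 + 4a` and `120` are nilpotent in a
commutative ring, then `a` is strongly π-regular. -/
lemma wsnc_key_comm (a : A)
    (hz : IsNilpotent (a ^ 5 - 5 * a ^ 3 + 4 * a)) (ht : IsNilpotent (120 : A)) :
    ∃ N : ℕ, 0 < N ∧ ∃ r : A, a ^ N = a ^ (N + 1) * r := by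
  have hw : IsNilpotent (a ^ 5 - a ^ 6 * (41 * a ^ 3 + 80 * a)) := by
    have hid : a ^ 5 - a ^ 6 * (41 * a ^ 3 + 80 * a) =
        (a ^ 5 - 5 * a ^ 3 + 4 * a) * (-(41 * a ^ 4) - 285 * a ^ 2 - 1260) +
          (120 : A) * (-(43 * a ^ 3) + 42 * a) := by ring
    rw [hid]
    exact (Commute.all _ _).isNilpotent_add
      ((Commute.all _ _).isNilpotent_mul_right hz)
      ((Commute.all _ _).isNilpotent_mul_right ht)
  obtain ⟨k, hk⟩ := hw
  set G : A := 41 * a ^ 3 + 80 * a with hG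
  have h0 : (a ^ 5 * (1 - a * G)) ^ (k + 1) = 0 := by
    have e1 : a ^ 5 * (1 - a * G) = a ^ 5 - a ^ 6 * G := by ring
    rw [e1, pow_succ, hk, zero_mul]
  obtain ⟨c, hc⟩ := sub_dvd_pow_sub_pow (1 : A) (1 - a * G) (k + 1)
  refine ⟨5 * (k + 1), by positivity, G * c, ?_⟩
  have step1 : (a ^ 5 * (1 - a * G)) ^ (k + 1) =
      a ^ (5 * (k + 1)) * (1 - a * G) ^ (k + 1) := by
    rw [mul_pow, pow_mul]
  have main : a ^ (5 * (k + 1)) * ((1 : A) ^ (k + 1)) =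
      a ^ (5 * (k + 1)) * ((1 : A) ^ (k + 1) - (1 - a * G) ^ (k + 1)) +
        (a ^ 5 * (1 - a * G)) ^ (k + 1) := by
    rw [step1]; ring
  rw [h0, add_zero, hc] at main
  calc a ^ (5 * (k + 1)) = a ^ (5 * (k + 1)) * ((1 : A) ^ (k + 1)) := by
        rw [one_pow, mul_one]
    _ = a ^ (5 * (k + 1)) * ((1 - (1 - a * G)) * c) := main
    _ = a ^ (5 * (k + 1) + 1) * (G * c) := by rw [pow_succ]; ring

end Aux

theorem wsnc_strongly_pi_regular {R : Type*} [Ring R]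
    (hR : IsWeaklyStrongly2NilClean R) :
    ∀ a : R, ∃ n : ℕ, 0 < n ∧ ∃ r : R, a ^ n = a ^ (n + 1) * r := by
  -- first, `120` is nilpotent in `R`
  have h120 : IsNilpotent (120 : R) := by
    obtain ⟨e, f, n, he, hf, hn, hef, hen, hfn, hcase⟩ := hR 3
    have hcomm : ∀ x ∈ ({e, f, n} : Set R), ∀ y ∈ ({e, f, n} : Set R),
        x * y = y * x := by
      rintro x hx y hy
      simp only [Set.mem_insert_iff, Set.mem_singleton_iff] at hx hy
      rcases hx with rfl | rfl | rfl <;> rcases hy with rfl | rfl | rfl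
      · rfl
      · exact hef.eq
      · exact hen.eq
      · exact hef.symm.eq
      · rfl
      · exact hfn.eq
      · exact hen.symm.eq
      · exact hfn.symm.eq
      · rfl
    set S := Subring.closure ({e, f, n} : Set R) with hS
    letI : CommRing S := Subring.closureCommRingOfComm hcomm
    have heS : e ∈ S := Subring.subset_closure (by simp)
    have hfS : f ∈ S := Subring.subset_closure (by simp)
    have hnS : n ∈ S := Subring.subset_closure (by simp)
    set E : S := ⟨e, heS⟩
    set F : S := ⟨f, hfS⟩
    set N : S := ⟨n, hnS⟩
    have hNn : IsNilpotent N := by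
      obtain ⟨k, hk⟩ := hn
      exact ⟨k, by exact Subtype.ext (by push_cast; exact hk)⟩
    have c3 : ((3 : S) : R) = (3 : R) := by norm_cast
    have hcS : (3 : S) = E + F + N ∨ (3 : S) = E - F + N ∨
        (3 : S) = -E + F + N ∨ (3 : S) = -E - F + N := by
      rcases hcase with h | h | h | h
      · exact Or.inl (by exact Subtype.ext (by rw [c3]; push_cast; exact h))
      · exact Or.inr (Or.inl (by exact Subtype.ext (by rw [c3]; push_cast; exact h)))
      · exact Or.inr (Or.inr (Or.inl (by exact Subtype.ext (by rw [c3]; push_cast; exact h))))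
      · exact Or.inr (Or.inr (Or.inr (by exact Subtype.ext (by rw [c3]; push_cast; exact h))))
    have h120S : IsNilpotent (120 : S) :=
      wsnc_nil120_comm E F N (by exact Subtype.ext he) (by exact Subtype.ext hf) hNn hcS
    obtain ⟨k, hk⟩ := h120S
    refine ⟨k, ?_⟩
    have key := congrArg (Subtype.val) hk
    push_cast at key
    have c120 : ((120 : S) : R) = (120 : R) := by norm_cast
    rw [c120] at key
    exact key
  intro a
  obtain ⟨e, f, n, he, hf, hn, hef, hen, hfn, hcase⟩ := hR a
  have hcomm : ∀ x ∈ ({e, f, n} : Set R), ∀ y ∈ ({e, f, n} : Set R),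
      x * y = y * x := by
    rintro x hx y hy
    simp only [Set.mem_insert_iff, Set.mem_singleton_iff] at hx hy
    rcases hx with rfl | rfl | rfl <;> rcases hy with rfl | rfl | rfl
    · rfl
    · exact hef.eq
    · exact hen.eq
    · exact hef.symm.eq
    · rfl
    · exact hfn.eq
    · exact hen.symm.eq
    · exact hfn.symm.eq
    · rfl
  set S := Subring.closure ({e, f, n} : Set R) with hS
  letI : CommRing S := Subring.closureCommRingOfComm hcomm
  have heS : e ∈ S := Subring.subset_closure (by simp)
  have hfS : f ∈ S := Subring.subset_closure (by simp)
  have hnS : n ∈ S := Subring.subset_closure (by simp)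
  have haS : a ∈ S := by
    rcases hcase with h | h | h | h <;> rw [h]
    · exact add_mem (add_mem heS hfS) hnS
    · exact add_mem (sub_mem heS hfS) hnS
    · exact add_mem (add_mem (neg_mem heS) hfS) hnS
    · exact add_mem (sub_mem (neg_mem heS) hfS) hnS
  set E : S := ⟨e, heS⟩
  set F : S := ⟨f, hfS⟩
  set N : S := ⟨n, hnS⟩
  set X : S := ⟨a, haS⟩
  have hNn : IsNilpotent N := by
    obtain ⟨k, hk⟩ := hn
    exact ⟨k, by exact Subtype.ext (by push_cast; exact hk)⟩
  have hcS : X = E + F + N ∨ X = E - F + N ∨ X = -E + F + N ∨ X = -E - F + N := by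
    rcases hcase with h | h | h | h
    · exact Or.inl (by exact Subtype.ext (by push_cast; exact h))
    · exact Or.inr (Or.inl (by exact Subtype.ext (by push_cast; exact h)))
    · exact Or.inr (Or.inr (Or.inl (by exact Subtype.ext (by push_cast; exact h))))
    · exact Or.inr (Or.inr (Or.inr (by exact Subtype.ext (by push_cast; exact h))))
  have hzS : IsNilpotent (X ^ 5 - 5 * X ^ 3 + 4 * X) :=
    wsnc_master E F N X (by exact Subtype.ext he) (by exact Subtype.ext hf) hNn hcS
  have h120S : IsNilpotent (120 : S) := by
    obtain ⟨k, hk⟩ := h120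
    have c120 : ((120 : S) : R) = (120 : R) := by norm_cast
    exact ⟨k, by exact Subtype.ext (by push_cast; rw [c120]; exact hk)⟩
  obtain ⟨M, hM, r, hr⟩ := wsnc_key_comm X hzS h120S
  refine ⟨M, hM, (r : R), ?_⟩
  have key := congrArg (Subtype.val) hr
  push_cast at key
  exact key
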